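/- Let Δ > 0 and let G be a finite simple Δ-regular graph of order n. Then a_3(G) ≥ 2n/(Δ + 1). -/

import Mathlib

/-- A graph is a linear `k`-forest if it is a forest in which every connected component
is a path with at most `k` edges: equivalently, it is acyclic, no vertex has three
distinct neighbours, and every path in it has length at most `k`. -/
def SimpleGraph.IsLinearForest {α : Type*} (k : ℕ) (H : SimpleGraph α) : Prop :=
  H.IsAcyclic ∧
  (∀ v a b c : α, H.Adj v a → H.Adj v b → H.Adj v c → a = b ∨ a = c ∨ b = c) ∧
  (∀ (u v : α) (p : H.Walk u v), p.IsPath → p.length ≤ k)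

namespace LF3

open Finset

set_option linter.unusedSectionVars false
set_option maxHeartbeats 1000000

section
variable {V : Type*} [Fintype V] [DecidableEq V] (G : SimpleGraph V) [DecidableRel G.Adj]


def Inv (T : Finset V) (β : V → ℕ) (m : ℕ) : Prop :=
  (∀ x ∈ T, β x < m) ∧
  (∀ x ∈ T, ∀ y ∈ T, G.Adj x y → β x = β y) ∧
  (∀ b : ℕ, (T.filter (fun x => β x = b)).card ≤ 4) ∧
  (∀ b : ℕ, ∀ x ∈ T.filter (fun x => β x = b),
      (G.neighborFinset x ∩ T.filter (fun x => β x = b)).card ≤ 2) ∧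
  (∀ b : ℕ, 2 ≤ (T.filter (fun x => β x = b)).card →
    ∃ x ∈ T.filter (fun x => β x = b), ∃ y ∈ T.filter (fun x => β x = b), x ≠ y ∧
      (G.neighborFinset x ∩ T.filter (fun x => β x = b)).card ≤ 1 ∧
      (G.neighborFinset y ∩ T.filter (fun x => β x = b)).card ≤ 1)

theorem inv_empty (β : V → ℕ) : Inv G ∅ β 0 := by
  refine ⟨by simp, by simp, by simp, by simp, by simp⟩

theorem inv_extend {T' : Finset V} {β' : V → ℕ} {m' : ℕ} (h : Inv G T' β' m')
    (K : Finset V) (hdisj : ∀ x ∈ K, x ∉ T')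
    (hsep : ∀ x ∈ K, ∀ y ∈ T', ¬ G.Adj x y)
    (hcard : K.card ≤ 4)
    (hdeg : ∀ x ∈ K, (G.neighborFinset x ∩ K).card ≤ 2)
    (hends : 2 ≤ K.card → ∃ x ∈ K, ∃ y ∈ K, x ≠ y ∧
      (G.neighborFinset x ∩ K).card ≤ 1 ∧ (G.neighborFinset y ∩ K).card ≤ 1) :
    Inv G (T' ∪ K) (fun x => if x ∈ K then m' else β' x) (m' + 1) := by
  obtain ⟨h1, h2, h3, h4, h5⟩ := h
  set β : V → ℕ := fun x => if x ∈ K then m' else β' x with hβ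
  have hβK : ∀ x ∈ K, β x = m' := fun x hx => by simp [hβ, hx]
  have hβT : ∀ x ∈ T', β x = β' x := fun x hx => by
    simp [hβ, hdisj, show x ∉ K from fun hK => hdisj x hK hx]
  have key : ∀ b : ℕ, (T' ∪ K).filter (fun x => β x = b)
      = if b = m' then K else T'.filter (fun x => β' x = b) := by
    intro b
    split_ifs with hb
    · subst hb
      ext x
      simp only [mem_filter, mem_union]
      constructor
      · rintro ⟨hx | hx, hxb⟩
        · exact absurd hxb (by rw [hβT x hx]; exact Nat.ne_of_lt (h1 x hx))
        · exact hx
      · intro hx; exact ⟨Or.inr hx, hβK x hx⟩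
    · ext x
      simp only [mem_filter, mem_union]
      constructor
      · rintro ⟨hx | hx, hxb⟩
        · rw [hβT x hx] at hxb; exact ⟨hx, hxb⟩
        · exact absurd hxb (by rw [hβK x hx]; exact fun h => hb h.symm)
      · rintro ⟨hx, hxb⟩; exact ⟨Or.inl hx, by rw [hβT x hx]; exact hxb⟩
  refine ⟨?_, ?_, ?_, ?_, ?_⟩
  · intro x hx
    rcases mem_union.1 hx with hx | hx
    · rw [hβT x hx]; exact Nat.lt_succ_of_lt (h1 x hx)
    · rw [hβK x hx]; exact Nat.lt_succ_self _
  · intro x hx y hy hadj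
    rcases mem_union.1 hx with hx | hx <;> rcases mem_union.1 hy with hy | hy
    · rw [hβT x hx, hβT y hy]; exact h2 x hx y hy hadj
    · exact absurd hadj.symm (hsep y hy x hx)
    · exact absurd hadj (hsep x hx y hy)
    · rw [hβK x hx, hβK y hy]
  · intro b; rw [key b]; split_ifs
    · exact hcard
    · exact h3 _
  · intro b x hx; rw [key b] at hx ⊢; split_ifs at hx ⊢
    · exact hdeg x hx
    · exact h4 _ x hx
  · intro b hb; rw [key b] at hb ⊢; split_ifs at hb ⊢
    · exact hends hb
    · exact h5 _ hb


theorem deg_le_single {K : Finset V} {x a : V}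
    (h : ∀ w ∈ K, G.Adj x w → w = a) : (G.neighborFinset x ∩ K).card ≤ 1 := by
  refine le_trans (card_le_card ?_) (card_singleton a).le
  intro w hw
  rw [mem_inter, SimpleGraph.mem_neighborFinset] at hw
  rw [mem_singleton]
  exact h w hw.2 hw.1

theorem deg_le_pair {K : Finset V} {x a b : V}
    (h : ∀ w ∈ K, G.Adj x w → (w = a ∨ w = b)) : (G.neighborFinset x ∩ K).card ≤ 2 := by
  refine le_trans (card_le_card (t := {a, b}) ?_) ((card_insert_le a {b}).trans (by simp))
  intro w hw
  rw [mem_inter, SimpleGraph.mem_neighborFinset] at hw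
  rw [mem_insert, mem_singleton]
  exact h w hw.2 hw.1

/-- From a set inducing max degree ≤ 1, the whole set carries a block structure. -/
theorem lemB1 : ∀ A : Finset V, (∀ v ∈ A, (G.neighborFinset v ∩ A).card ≤ 1) →
    ∃ β m, Inv G A β m := by
  intro A
  induction A using Finset.strongInduction with
  | _ A ih =>
    intro hA
    rcases A.eq_empty_or_nonempty with rfl | ⟨v, hv⟩
    · exact ⟨fun _ => 0, 0, inv_empty G _⟩
    by_cases hd : (G.neighborFinset v ∩ A).card = 0
    · -- v isolated in A : remove {v}
      set R : Finset V := {v} with hR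
      have hRA : R ⊆ A := by simp [hR, hv]
      have hA' : ∀ u ∈ A \ R, (G.neighborFinset u ∩ (A \ R)).card ≤ 1 := fun u hu =>
        le_trans (card_le_card (inter_subset_inter (Subset.refl _) sdiff_subset))
          (hA u (mem_sdiff.1 hu).1)
      obtain ⟨β', m', hInv⟩ := ih _ (sdiff_ssubset hRA ⟨v, by simp [hR]⟩) hA'
      have hnoadj : ∀ x ∈ R, ∀ y, y ∈ A → ¬ G.Adj x y := by
        intro x hx y hy hadj
        rw [hR, mem_singleton] at hx; subst hx
        have : y ∈ G.neighborFinset x ∩ A :=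
          mem_inter.2 ⟨(SimpleGraph.mem_neighborFinset G x y).2 hadj, hy⟩
        rw [card_eq_zero] at hd
        rw [hd] at this; exact notMem_empty _ this
      have hext := inv_extend G hInv R
        (fun x hx hmem => (mem_sdiff.1 hmem).2 hx)
        (fun x hx y hy => hnoadj x hx y (mem_sdiff.1 hy).1)
        (by simp [hR])
        (fun x hx => le_trans (deg_le_single G (a := x)
          (fun w hw hadj => absurd hadj (hnoadj x hx w (hRA hw)))) (by omega))
        (by intro h2; rw [hR, card_singleton] at h2; omega)
      rw [sdiff_union_of_subset hRA] at hext
      exact ⟨_, m' + 1, hext⟩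
    · -- v has a unique neighbour u in A, and u's only neighbour is v
      obtain ⟨u, hu⟩ := card_eq_one.1 (le_antisymm (hA v hv) (by omega))
      have huA : u ∈ A := (mem_inter.1 (hu ▸ mem_singleton_self u)).2
      have hadjvu : G.Adj v u := by
        have := hu ▸ mem_singleton_self u
        exact (SimpleGraph.mem_neighborFinset G v u).1 (mem_inter.1 this).1
      have hvu : v ≠ u := hadjvu.ne
      have hnu : G.neighborFinset u ∩ A = {v} := by
        apply eq_singleton_iff_unique_mem.2
        refine ⟨mem_inter.2 ⟨(SimpleGraph.mem_neighborFinset G u v).2 hadjvu.symm, hv⟩, ?_⟩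
        intro w hw
        exact card_le_one.1 (hA u huA) w hw v
          (mem_inter.2 ⟨(SimpleGraph.mem_neighborFinset G u v).2 hadjvu.symm, hv⟩)
      set R : Finset V := {v, u} with hR
      have hRA : R ⊆ A := by
        intro w hw; rw [hR, mem_insert, mem_singleton] at hw
        rcases hw with rfl | rfl <;> assumption
      have hA' : ∀ w ∈ A \ R, (G.neighborFinset w ∩ (A \ R)).card ≤ 1 := fun w hw =>
        le_trans (card_le_card (inter_subset_inter (Subset.refl _) sdiff_subset))
          (hA w (mem_sdiff.1 hw).1)
      obtain ⟨β', m', hInv⟩ := ih _ (sdiff_ssubset hRA ⟨v, by simp [hR]⟩) hA'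
      have hnbr : ∀ x ∈ R, ∀ y ∈ A, G.Adj x y → y ∈ R := by
        intro x hx y hy hadj
        rw [hR, mem_insert, mem_singleton] at hx
        rcases hx with rfl | rfl
        · have : y ∈ G.neighborFinset x ∩ A :=
            mem_inter.2 ⟨(SimpleGraph.mem_neighborFinset G x y).2 hadj, hy⟩
          rw [hu, mem_singleton] at this
          rw [hR, this]; simp
        · have : y ∈ G.neighborFinset x ∩ A :=
            mem_inter.2 ⟨(SimpleGraph.mem_neighborFinset G x y).2 hadj, hy⟩
          rw [hnu, mem_singleton] at this
          rw [hR, this]; simp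
      have hext := inv_extend G hInv R
        (fun x hx hmem => (mem_sdiff.1 hmem).2 hx)
        (fun x hx y hy hadj =>
          (mem_sdiff.1 hy).2 (hnbr x hx y (mem_sdiff.1 hy).1 hadj))
        (le_trans (card_insert_le _ _) (by simp))
        (fun x hx => by
          rw [hR, mem_insert, mem_singleton] at hx
          rcases hx with rfl | rfl
          · refine le_trans (deg_le_single G (a := u) ?_) (by omega)
            intro w hw hadj
            rw [hR, mem_insert, mem_singleton] at hw
            rcases hw with rfl | rfl
            · exact absurd hadj (G.irrefl)
            · rfl
          · refine le_trans (deg_le_single G (a := v) ?_) (by omega)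
            intro w hw hadj
            rw [hR, mem_insert, mem_singleton] at hw
            rcases hw with rfl | rfl
            · rfl
            · exact absurd hadj (G.irrefl))
        (fun _ => by
          refine ⟨v, by simp [hR], u, by simp [hR], hvu, ?_, ?_⟩
          · refine deg_le_single G (a := u) ?_
            intro w hw hadj
            rw [hR, mem_insert, mem_singleton] at hw
            rcases hw with rfl | rfl
            · exact absurd hadj (G.irrefl)
            · rfl
          · refine deg_le_single G (a := v) ?_
            intro w hw hadj
            rw [hR, mem_insert, mem_singleton] at hw
            rcases hw with rfl | rfl
            · rfl
            · exact absurd hadj (G.irrefl))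
      rw [sdiff_union_of_subset hRA] at hext
      exact ⟨_, m' + 1, hext⟩

/-- One greedy step for the max-degree-2 extraction. -/
theorem step {A R K : Finset V}
    (ih : ∀ B ⊂ A, (∀ v ∈ B, (G.neighborFinset v ∩ B).card ≤ 2) →
      ∃ T β m, T ⊆ B ∧ Inv G T β m ∧ 2 * B.card ≤ 3 * T.card)
    (hA : ∀ v ∈ A, (G.neighborFinset v ∩ A).card ≤ 2)
    (hRA : R ⊆ A) (hKR : K ⊆ R) (hRne : R.Nonempty)
    (hsep : ∀ x ∈ K, (G.neighborFinset x ∩ A) ⊆ R)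
    (hratio : 2 * R.card ≤ 3 * K.card)
    (hKcard : K.card ≤ 4)
    (hdeg : ∀ x ∈ K, (G.neighborFinset x ∩ K).card ≤ 2)
    (hends : 2 ≤ K.card → ∃ x ∈ K, ∃ y ∈ K, x ≠ y ∧
      (G.neighborFinset x ∩ K).card ≤ 1 ∧ (G.neighborFinset y ∩ K).card ≤ 1) :
    ∃ T β m, T ⊆ A ∧ Inv G T β m ∧ 2 * A.card ≤ 3 * T.card := by
  have hA' : ∀ v ∈ A \ R, (G.neighborFinset v ∩ (A \ R)).card ≤ 2 := fun u hu =>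
    le_trans (card_le_card (inter_subset_inter (Subset.refl _) sdiff_subset))
      (hA u (mem_sdiff.1 hu).1)
  obtain ⟨T', β', m', hT'sub, hInv', hcard'⟩ := ih _ (sdiff_ssubset hRA hRne) hA'
  have hdisjKT : ∀ x ∈ K, x ∉ T' := fun x hx hmem =>
    (mem_sdiff.1 (hT'sub hmem)).2 (hKR hx)
  have hsepKT : ∀ x ∈ K, ∀ y ∈ T', ¬ G.Adj x y := by
    intro x hx y hy hadj
    have hyA : y ∈ A := (mem_sdiff.1 (hT'sub hy)).1
    have : y ∈ R := hsep x hx (mem_inter.2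
      ⟨(SimpleGraph.mem_neighborFinset G x y).2 hadj, hyA⟩)
    exact (mem_sdiff.1 (hT'sub hy)).2 this
  have hext := inv_extend G hInv' K hdisjKT hsepKT hKcard hdeg hends
  refine ⟨T' ∪ K, _, m' + 1, ?_, hext, ?_⟩
  · exact union_subset (hT'sub.trans sdiff_subset) (hKR.trans hRA)
  · have hdisj : Disjoint T' K := by
      rw [disjoint_right]; intro a ha; exact hdisjKT a ha
    rw [card_union_of_disjoint hdisj]
    have h1 : A.card ≤ (A \ R).card + R.card := by
      refine le_trans (card_le_card (fun x hx => ?_)) (card_union_le _ _)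
      rw [mem_union, mem_sdiff]
      by_cases hxR : x ∈ R
      · exact Or.inr hxR
      · exact Or.inl ⟨hx, hxR⟩
    omega

/-- Helper: extract the "other" element of a 2-element neighbourhood. -/
theorem other_nbr {A : Finset V} {z x : V}
    (hcard : (G.neighborFinset z ∩ A).card = 2)
    (hx : x ∈ G.neighborFinset z ∩ A) :
    ∃ zz, zz ≠ x ∧ G.neighborFinset z ∩ A = {x, zz} := by
  have h1 : ((G.neighborFinset z ∩ A).erase x).card = 1 := by
    rw [card_erase_of_mem hx, hcard]
  obtain ⟨zz, hzz⟩ := card_eq_one.1 h1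
  have hzzmem : zz ∈ (G.neighborFinset z ∩ A).erase x := by
    rw [hzz]; exact mem_singleton_self zz
  refine ⟨zz, ?_, ?_⟩
  · exact ne_of_mem_erase hzzmem
  · ext w
    rw [mem_insert, mem_singleton]
    constructor
    · intro hw
      by_cases hwx : w = x
      · exact Or.inl hwx
      · have : w ∈ (G.neighborFinset z ∩ A).erase x := mem_erase.2 ⟨hwx, hw⟩
        rw [hzz, mem_singleton] at this
        exact Or.inr this
    · intro hw
      rcases hw with rfl | rfl
      · exact hx
      · exact mem_of_mem_erase hzzmem

/-- From a set inducing max degree ≤ 2, two thirds of it carries a block structure. -/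
theorem lemB2 : ∀ A : Finset V, (∀ v ∈ A, (G.neighborFinset v ∩ A).card ≤ 2) →
    ∃ T β m, T ⊆ A ∧ Inv G T β m ∧ 2 * A.card ≤ 3 * T.card := by
  intro A
  induction A using Finset.strongInduction with
  | _ A ih =>
    intro hA
    rcases A.eq_empty_or_nonempty with rfl | hAne
    · exact ⟨∅, fun _ => 0, 0, Subset.refl _, inv_empty G _, by simp⟩
    by_cases hd0 : ∃ v ∈ A, (G.neighborFinset v ∩ A).card = 0
    · -- isolated vertex: K = R = {v}
      obtain ⟨v, hv, hd⟩ := hd0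
      refine step G ih hA (R := {v}) (K := {v}) (by simpa using hv) (Subset.refl _)
        ⟨v, mem_singleton_self v⟩ ?_ (by simp) (by simp) ?_ ?_
      · intro x hx
        rw [mem_singleton] at hx; subst hx
        rw [card_eq_zero] at hd
        rw [hd]; exact empty_subset _
      · intro x hx
        rw [mem_singleton] at hx; subst hx
        refine le_trans (deg_le_single G (a := x) ?_) (by omega)
        intro w hw hadj
        rw [mem_singleton] at hw; subst hw; exact absurd hadj (G.irrefl)
      · intro h; rw [card_singleton] at h; omega
    by_cases hd1 : ∃ v ∈ A, (G.neighborFinset v ∩ A).card = 1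
    · -- vertex of degree 1: keep the edge (v,u), delete also u's other nbrs
      obtain ⟨v, hv, hd⟩ := hd1
      obtain ⟨u, hu⟩ := card_eq_one.1 hd
      have huA : u ∈ A := (mem_inter.1 (hu ▸ mem_singleton_self u)).2
      have hadjvu : G.Adj v u :=
        (SimpleGraph.mem_neighborFinset G v u).1 (mem_inter.1 (hu ▸ mem_singleton_self u)).1
      have hvu : v ≠ u := hadjvu.ne
      set R : Finset V := insert v (insert u (G.neighborFinset u ∩ A)) with hR
      have hRA : R ⊆ A := by
        intro w hw
        rw [hR, mem_insert, mem_insert] at hw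
        rcases hw with rfl | rfl | hw
        · exact hv
        · exact huA
        · exact (mem_inter.1 hw).2
      have hKR : ({v, u} : Finset V) ⊆ R := by
        intro w hw; rw [mem_insert, mem_singleton] at hw
        rcases hw with rfl | rfl
        · exact mem_insert_self _ _
        · rw [hR]; exact mem_insert_of_mem (mem_insert_self _ _)
      refine step G ih hA hRA hKR ⟨v, mem_insert_self _ _⟩ ?_ ?_
        (le_trans (card_insert_le _ _) (by simp)) ?_ ?_
      · -- separation
        intro x hx
        rw [mem_insert, mem_singleton] at hx
        rcases hx with rfl | rfl
        · intro w hw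
          rw [hu, mem_singleton] at hw; subst hw
          rw [hR]; exact mem_insert_of_mem (mem_insert_self _ _)
        · intro w hw
          rw [hR]; exact mem_insert_of_mem (mem_insert_of_mem hw)
      · -- ratio : |R| ≤ 3, |K| = 2
        have h1 : R.card ≤ 3 := by
          have hvin : v ∈ insert u (G.neighborFinset u ∩ A) :=
            mem_insert_of_mem
              (mem_inter.2 ⟨(SimpleGraph.mem_neighborFinset G u v).2 hadjvu.symm, hv⟩)
          rw [hR, insert_eq_self.2 hvin]
          refine le_trans (card_insert_le _ _) ?_
          have := hA u huA
          omega
        have h2 : ({v, u} : Finset V).card = 2 := by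
          rw [card_insert_of_notMem (by simpa using hvu), card_singleton]
        omega
      · -- degrees within K
        intro x hx
        rw [mem_insert, mem_singleton] at hx
        rcases hx with rfl | rfl
        · refine le_trans (deg_le_single G (a := u) ?_) (by omega)
          intro w hw hadj
          rw [mem_insert, mem_singleton] at hw
          rcases hw with rfl | rfl
          · exact absurd hadj (G.irrefl)
          · rfl
        · refine le_trans (deg_le_single G (a := v) ?_) (by omega)
          intro w hw hadj
          rw [mem_insert, mem_singleton] at hw
          rcases hw with rfl | rfl
          · rfl
          · exact absurd hadj (G.irrefl)
      · -- endpoints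
        intro _
        refine ⟨v, mem_insert_self _ _, u, by simp, hvu, ?_, ?_⟩
        · refine deg_le_single G (a := u) ?_
          intro w hw hadj
          rw [mem_insert, mem_singleton] at hw
          rcases hw with rfl | rfl
          · exact absurd hadj (G.irrefl)
          · rfl
        · refine deg_le_single G (a := v) ?_
          intro w hw hadj
          rw [mem_insert, mem_singleton] at hw
          rcases hw with rfl | rfl
          · rfl
          · exact absurd hadj (G.irrefl)
    · -- every vertex has degree exactly 2
      have hdeg2 : ∀ v ∈ A, (G.neighborFinset v ∩ A).card = 2 := by
        intro v hv
        have h2 := hA v hv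
        have h0 : (G.neighborFinset v ∩ A).card ≠ 0 := fun h => hd0 ⟨v, hv, h⟩
        have h1 : (G.neighborFinset v ∩ A).card ≠ 1 := fun h => hd1 ⟨v, hv, h⟩
        omega
      obtain ⟨x, hx⟩ := hAne
      obtain ⟨y, z, hyz, hpair⟩ := card_eq_two.1 (hdeg2 x hx)
      have hyx : y ∈ G.neighborFinset x ∩ A := by rw [hpair]; exact mem_insert_self _ _
      have hzx : z ∈ G.neighborFinset x ∩ A := by rw [hpair]; simp
      have hAxy : G.Adj x y := (SimpleGraph.mem_neighborFinset G x y).1 (mem_inter.1 hyx).1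
      have hAxz : G.Adj x z := (SimpleGraph.mem_neighborFinset G x z).1 (mem_inter.1 hzx).1
      have hyA : y ∈ A := (mem_inter.1 hyx).2
      have hzA : z ∈ A := (mem_inter.1 hzx).2
      have hxy : x ≠ y := hAxy.ne
      have hxz : x ≠ z := hAxz.ne
      have memN : ∀ {v w : V}, v ∈ A → w ∈ A → G.Adj v w → w ∈ G.neighborFinset v ∩ A :=
        fun hv hw hadj => mem_inter.2 ⟨(SimpleGraph.mem_neighborFinset G _ _).2 hadj, hw⟩
      by_cases hAyz : G.Adj y z
      · -- triangle-ish: keep edge (x,y), remove {x,y,z}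
        have hNy : G.neighborFinset y ∩ A = {x, z} := by
          refine (eq_of_subset_of_card_le ?_ ?_).symm
          · intro w hw
            rw [mem_insert, mem_singleton] at hw
            rcases hw with rfl | rfl
            · exact memN hyA hx hAxy.symm
            · exact memN hyA hzA hAyz
          · rw [hdeg2 y hyA, card_insert_of_notMem (by simpa using hxz), card_singleton]
        set R : Finset V := {x, y, z} with hR
        have hRA : R ⊆ A := by
          intro w hw
          rw [hR, mem_insert, mem_insert, mem_singleton] at hw
          rcases hw with rfl | rfl | rfl <;> assumption
        have hKR : ({x, y} : Finset V) ⊆ R := by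
          intro w hw; rw [mem_insert, mem_singleton] at hw
          rw [hR, mem_insert, mem_insert, mem_singleton]
          tauto
        refine step G ih hA hRA hKR ⟨x, by simp [hR]⟩ ?_ ?_
          (le_trans (card_insert_le _ _) (by simp)) ?_ ?_
        · intro w hw
          rw [mem_insert, mem_singleton] at hw
          rcases hw with rfl | rfl
          · rw [hpair]; intro t ht
            rw [mem_insert, mem_singleton] at ht
            rw [hR, mem_insert, mem_insert, mem_singleton]; tauto
          · rw [hNy]; intro t ht
            rw [mem_insert, mem_singleton] at ht
            rw [hR, mem_insert, mem_insert, mem_singleton]; tauto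
        · have h1 : R.card ≤ 3 := by
            rw [hR]
            refine le_trans (card_insert_le _ _) ?_
            refine le_trans (Nat.add_le_add_right (card_insert_le _ _) 1) (by simp)
          have h2 : ({x, y} : Finset V).card = 2 := by
            rw [card_insert_of_notMem (by simpa using hxy), card_singleton]
          omega
        · intro w hw
          rw [mem_insert, mem_singleton] at hw
          rcases hw with rfl | rfl
          · refine le_trans (deg_le_single G (a := y) ?_) (by omega)
            intro t ht hadj
            rw [mem_insert, mem_singleton] at ht
            rcases ht with rfl | rfl
            · exact absurd hadj (G.irrefl)
            · rfl
          · refine le_trans (deg_le_single G (a := x) ?_) (by omega)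
            intro t ht hadj
            rw [mem_insert, mem_singleton] at ht
            rcases ht with rfl | rfl
            · rfl
            · exact absurd hadj (G.irrefl)
        · intro _
          refine ⟨x, mem_insert_self _ _, y, by simp, hxy, ?_, ?_⟩
          · refine deg_le_single G (a := y) ?_
            intro t ht hadj
            rw [mem_insert, mem_singleton] at ht
            rcases ht with rfl | rfl
            · exact absurd hadj (G.irrefl)
            · rfl
          · refine deg_le_single G (a := x) ?_
            intro t ht hadj
            rw [mem_insert, mem_singleton] at ht
            rcases ht with rfl | rfl
            · rfl
            · exact absurd hadj (G.irrefl)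
      · -- y and z not adjacent
        obtain ⟨y', hy'x, hNy⟩ := other_nbr G (hdeg2 y hyA) (memN hyA hx hAxy.symm)
        obtain ⟨z', hz'x, hNz⟩ := other_nbr G (hdeg2 z hzA) (memN hzA hx hAxz.symm)
        have hy'mem : y' ∈ G.neighborFinset y ∩ A := by rw [hNy]; simp
        have hz'mem : z' ∈ G.neighborFinset z ∩ A := by rw [hNz]; simp
        have hAyy' : G.Adj y y' := (SimpleGraph.mem_neighborFinset G y y').1 (mem_inter.1 hy'mem).1
        have hAzz' : G.Adj z z' := (SimpleGraph.mem_neighborFinset G z z').1 (mem_inter.1 hz'mem).1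
        have hy'A : y' ∈ A := (mem_inter.1 hy'mem).2
        have hz'A : z' ∈ A := (mem_inter.1 hz'mem).2
        have hy'y : y' ≠ y := fun h => absurd (h ▸ hAyy') (G.irrefl)
        have hz'z : z' ≠ z := fun h => absurd (h ▸ hAzz') (G.irrefl)
        have hy'z : y' ≠ z := fun h => hAyz (h ▸ hAyy')
        have hz'y : z' ≠ y := fun h => hAyz (SimpleGraph.Adj.symm (h ▸ hAzz'))
        by_cases hcase : y' = z'
        · -- C4-like: keep the path y' - y - x, remove {x,y,z,y'}
          subst hcase
          have hNy' : G.neighborFinset y' ∩ A = {y, z} := by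
            refine (eq_of_subset_of_card_le ?_ ?_).symm
            · intro w hw
              rw [mem_insert, mem_singleton] at hw
              rcases hw with rfl | rfl
              · exact memN hy'A hyA hAyy'.symm
              · exact memN hy'A hzA hAzz'.symm
            · rw [hdeg2 y' hy'A, card_insert_of_notMem (by simpa using hyz), card_singleton]
          set R : Finset V := {x, y, z, y'} with hR
          set K : Finset V := {x, y, y'} with hK
          have hmemR : ∀ w, w ∈ R ↔ (w = x ∨ w = y ∨ w = z ∨ w = y') := by
            intro w; rw [hR]; simp
          have hmemK : ∀ w, w ∈ K ↔ (w = x ∨ w = y ∨ w = y') := by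
            intro w; rw [hK]; simp
          have hRA : R ⊆ A := by
            intro w hw; rw [hmemR] at hw
            rcases hw with rfl | rfl | rfl | rfl <;> assumption
          have hKR : K ⊆ R := by
            intro w hw; rw [hmemK] at hw; rw [hmemR]; tauto
          refine step G ih hA hRA hKR ⟨x, by rw [hmemR]; tauto⟩ ?_ ?_ ?_ ?_ ?_
          · intro w hw
            rw [hmemK] at hw
            rcases hw with h9 | h9 | h9 <;> rw [h9]
            · rw [hpair]; intro t ht
              rw [mem_insert, mem_singleton] at ht; rw [hmemR]; tauto
            · rw [hNy]; intro t ht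
              rw [mem_insert, mem_singleton] at ht; rw [hmemR]; tauto
            · rw [hNy']; intro t ht
              rw [mem_insert, mem_singleton] at ht; rw [hmemR]; tauto
          · have h1 : R.card ≤ 4 := by
              rw [hR]
              refine le_trans (card_insert_le _ _) (Nat.add_le_add_right ?_ 1)
              refine le_trans (card_insert_le _ _) (Nat.add_le_add_right ?_ 1)
              exact le_trans (card_insert_le _ _) (by simp)
            have h2 : K.card = 3 := by
              rw [hK, card_insert_of_notMem, card_insert_of_notMem, card_singleton]
              · simpa using hy'y.symm
              · simp only [mem_insert, mem_singleton]
                push_neg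
                exact ⟨hxy, fun h => hy'x h.symm⟩
            omega
          · have h2 : K.card = 3 := by
              rw [hK, card_insert_of_notMem, card_insert_of_notMem, card_singleton]
              · simpa using hy'y.symm
              · simp only [mem_insert, mem_singleton]
                push_neg
                exact ⟨hxy, fun h => hy'x h.symm⟩
            omega
          · intro w hw
            rw [hmemK] at hw
            rcases hw with h9 | h9 | h9 <;> rw [h9]
            · refine le_trans (deg_le_single G (a := y) ?_) (by omega)
              intro t ht hadj
              have htA : t ∈ A := hRA (hKR ht)
              have : t ∈ G.neighborFinset x ∩ A := memN hx htA hadj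
              rw [hpair, mem_insert, mem_singleton] at this
              rcases this with rfl | rfl
              · rfl
              · exfalso
                rw [hmemK] at ht
                rcases ht with rfl | rfl | rfl
                · exact hxz rfl
                · exact hyz rfl
                · exact hy'z rfl
            · refine deg_le_pair G (a := x) (b := y') ?_
              intro t ht hadj
              have htA : t ∈ A := hRA (hKR ht)
              have : t ∈ G.neighborFinset y ∩ A := memN hyA htA hadj
              rw [hNy, mem_insert, mem_singleton] at this
              tauto
            · refine le_trans (deg_le_single G (a := y) ?_) (by omega)
              intro t ht hadj
              have htA : t ∈ A := hRA (hKR ht)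
              have : t ∈ G.neighborFinset y' ∩ A := memN hy'A htA hadj
              rw [hNy', mem_insert, mem_singleton] at this
              rcases this with rfl | rfl
              · rfl
              · exfalso
                rw [hmemK] at ht
                rcases ht with rfl | rfl | rfl
                · exact hxz rfl
                · exact hyz rfl
                · exact hy'z rfl
          · intro _
            refine ⟨x, by rw [hmemK]; tauto, y', by rw [hmemK]; tauto,
              fun h => hy'x h.symm, ?_, ?_⟩
            · refine deg_le_single G (a := y) ?_
              intro t ht hadj
              have htA : t ∈ A := hRA (hKR ht)
              have : t ∈ G.neighborFinset x ∩ A := memN hx htA hadj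
              rw [hpair, mem_insert, mem_singleton] at this
              rcases this with rfl | rfl
              · rfl
              · exfalso
                rw [hmemK] at ht
                rcases ht with rfl | rfl | rfl
                · exact hxz rfl
                · exact hyz rfl
                · exact hy'z rfl
            · refine deg_le_single G (a := y) ?_
              intro t ht hadj
              have htA : t ∈ A := hRA (hKR ht)
              have : t ∈ G.neighborFinset y' ∩ A := memN hy'A htA hadj
              rw [hNy', mem_insert, mem_singleton] at this
              rcases this with rfl | rfl
              · rfl
              · exfalso
                rw [hmemK] at ht
                rcases ht with rfl | rfl | rfl
                · exact hxz rfl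
                · exact hyz rfl
                · exact hy'z rfl
        · -- main case: keep the path y' - y - x - z
          have hy'z' : y' ≠ z' := hcase
          have hAy'z : ¬ G.Adj y' z := by
            intro h
            have : y' ∈ G.neighborFinset z ∩ A := memN hzA hy'A h.symm
            rw [hNz, mem_insert, mem_singleton] at this
            rcases this with rfl | rfl
            · exact hy'x rfl
            · exact hy'z' rfl
          have hAxy' : ¬ G.Adj x y' := by
            intro h
            have : y' ∈ G.neighborFinset x ∩ A := memN hx hy'A h
            rw [hpair, mem_insert, mem_singleton] at this
            rcases this with rfl | rfl
            · exact hy'y rfl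
            · exact hy'z rfl
          obtain ⟨y'', hy''y, hNy'⟩ := other_nbr G (hdeg2 y' hy'A) (memN hy'A hyA hAyy'.symm)
          have hy''mem : y'' ∈ G.neighborFinset y' ∩ A := by rw [hNy']; simp
          have hy''A : y'' ∈ A := (mem_inter.1 hy''mem).2
          have hz'Amem : z' ∈ A := hz'A
          set K : Finset V := {y', y, x, z} with hK
          set R : Finset V := {y', y, x, z, y'', z'} with hR
          have hmemK : ∀ w, w ∈ K ↔ (w = y' ∨ w = y ∨ w = x ∨ w = z) := by
            intro w; rw [hK]; simp
          have hmemR : ∀ w, w ∈ R ↔ (w = y' ∨ w = y ∨ w = x ∨ w = z ∨ w = y'' ∨ w = z') := by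
            intro w; rw [hR]; simp
          have hRA : R ⊆ A := by
            intro w hw; rw [hmemR] at hw
            rcases hw with rfl | rfl | rfl | rfl | rfl | rfl <;> assumption
          have hKR : K ⊆ R := by
            intro w hw; rw [hmemK] at hw; rw [hmemR]; tauto
          -- non-membership facts
          have hy''K : y'' ∉ K := by
            rw [hmemK]
            push_neg
            refine ⟨hy''y ∘ ?_, hy''y, ?_, ?_⟩
            · intro h
              exfalso
              have : y'' ∈ G.neighborFinset y' ∩ A := hy''mem
              rw [h] at this
              exact absurd ((SimpleGraph.mem_neighborFinset G y' y').1 (mem_inter.1 this).1) (G.irrefl)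
            · intro h
              subst h
              exact hAxy' ((SimpleGraph.mem_neighborFinset G y' y'').1 (mem_inter.1 hy''mem).1).symm
            · intro h
              subst h
              exact hAy'z ((SimpleGraph.mem_neighborFinset G y' y'').1 (mem_inter.1 hy''mem).1)
          have hz'K : z' ∉ K := by
            rw [hmemK]
            push_neg
            exact ⟨fun h => hy'z' h.symm, hz'y, hz'x, hz'z⟩
          refine step G ih hA hRA hKR ⟨x, by rw [hmemR]; tauto⟩ ?_ ?_ ?_ ?_ ?_
          · intro w hw
            rw [hmemK] at hw
            rcases hw with h9 | h9 | h9 | h9 <;> rw [h9]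
            · rw [hNy']; intro t ht
              rw [mem_insert, mem_singleton] at ht; rw [hmemR]; tauto
            · rw [hNy]; intro t ht
              rw [mem_insert, mem_singleton] at ht; rw [hmemR]; tauto
            · rw [hpair]; intro t ht
              rw [mem_insert, mem_singleton] at ht; rw [hmemR]; tauto
            · rw [hNz]; intro t ht
              rw [mem_insert, mem_singleton] at ht; rw [hmemR]; tauto
          · have h1 : R.card ≤ 6 := by
              rw [hR]
              refine le_trans (card_insert_le _ _) (Nat.add_le_add_right ?_ 1)
              refine le_trans (card_insert_le _ _) (Nat.add_le_add_right ?_ 1)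
              refine le_trans (card_insert_le _ _) (Nat.add_le_add_right ?_ 1)
              refine le_trans (card_insert_le _ _) (Nat.add_le_add_right ?_ 1)
              exact le_trans (card_insert_le _ _) (by simp)
            have h2 : K.card = 4 := by
              rw [hK, card_insert_of_notMem, card_insert_of_notMem,
                card_insert_of_notMem, card_singleton]
              · simpa using hxz
              · simp only [mem_insert, mem_singleton]
                push_neg
                exact ⟨hxy.symm, hyz⟩
              · simp only [mem_insert, mem_singleton]
                push_neg
                exact ⟨hy'y, hy'x, hy'z⟩
            omega
          · have h2 : K.card = 4 := by
              rw [hK, card_insert_of_notMem, card_insert_of_notMem,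
                card_insert_of_notMem, card_singleton]
              · simpa using hxz
              · simp only [mem_insert, mem_singleton]
                push_neg
                exact ⟨hxy.symm, hyz⟩
              · simp only [mem_insert, mem_singleton]
                push_neg
                exact ⟨hy'y, hy'x, hy'z⟩
            omega
          · intro w hw
            rw [hmemK] at hw
            rcases hw with h9 | h9 | h9 | h9 <;> rw [h9]
            · refine le_trans (deg_le_single G (a := y) ?_) (by omega)
              intro t ht hadj
              have htA : t ∈ A := hRA (hKR ht)
              have : t ∈ G.neighborFinset y' ∩ A := memN hy'A htA hadj
              rw [hNy', mem_insert, mem_singleton] at this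
              rcases this with rfl | rfl
              · rfl
              · exact absurd ht hy''K
            · refine deg_le_pair G (a := x) (b := y') ?_
              intro t ht hadj
              have htA : t ∈ A := hRA (hKR ht)
              have : t ∈ G.neighborFinset y ∩ A := memN hyA htA hadj
              rw [hNy, mem_insert, mem_singleton] at this
              tauto
            · refine deg_le_pair G (a := y) (b := z) ?_
              intro t ht hadj
              have htA : t ∈ A := hRA (hKR ht)
              have : t ∈ G.neighborFinset x ∩ A := memN hx htA hadj
              rw [hpair, mem_insert, mem_singleton] at this
              tauto
            · refine le_trans (deg_le_single G (a := x) ?_) (by omega)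
              intro t ht hadj
              have htA : t ∈ A := hRA (hKR ht)
              have : t ∈ G.neighborFinset z ∩ A := memN hzA htA hadj
              rw [hNz, mem_insert, mem_singleton] at this
              rcases this with rfl | rfl
              · rfl
              · exact absurd ht hz'K
          · intro _
            refine ⟨y', by rw [hmemK]; tauto, z, by rw [hmemK]; tauto, hy'z, ?_, ?_⟩
            · refine deg_le_single G (a := y) ?_
              intro t ht hadj
              have htA : t ∈ A := hRA (hKR ht)
              have : t ∈ G.neighborFinset y' ∩ A := memN hy'A htA hadj
              rw [hNy', mem_insert, mem_singleton] at this
              rcases this with rfl | rfl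
              · rfl
              · exact absurd ht hy''K
            · refine deg_le_single G (a := x) ?_
              intro t ht hadj
              have htA : t ∈ A := hRA (hKR ht)
              have : t ∈ G.neighborFinset z ∩ A := memN hzA htA hadj
              rw [hNz, mem_insert, mem_singleton] at this
              rcases this with rfl | rfl
              · rfl
              · exact absurd ht hz'K




/-- Lovász-type partition: a `Δ`-regular graph can be vertex-partitioned into `k` classes
with prescribed maximum internal degrees `d i`, provided `Δ + 1 ≤ ∑ (d i + 1)`. -/
theorem lovasz_partition {Δ k : ℕ} (hk : 0 < k) (d : Fin k → ℕ)
    (hsum : Δ + 1 ≤ ∑ i, (d i + 1)) (hreg : G.IsRegularOfDegree Δ) :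
    ∃ c : V → Fin k, ∀ v : V,
      ((G.neighborFinset v).filter (fun u => c u = c v)).card ≤ d (c v) := by
  classical
  set Φ : (V → Fin k) → ℤ := fun c =>
    (∑ u : V, ∑ w ∈ G.neighborFinset u, (if c w = c u then (1 : ℤ) else 0))
      - 2 * ∑ u : V, (d (c u) : ℤ) with hΦ
  have hne : (Finset.univ : Finset (V → Fin k)).Nonempty :=
    ⟨fun _ => ⟨0, hk⟩, mem_univ _⟩
  obtain ⟨c, -, hmin⟩ := Finset.exists_min_image Finset.univ Φ hne
  refine ⟨c, fun v => ?_⟩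
  by_contra hcon
  push_neg at hcon
  -- there is a class j that v sees at most d j times
  have hfib : ∑ j : Fin k, ((G.neighborFinset v).filter (fun u => c u = j)).card = Δ := by
    rw [← Finset.card_eq_sum_card_fiberwise (fun u _ => mem_univ (c u)),
      SimpleGraph.card_neighborFinset_eq_degree, hreg v]
  have hjex : ∃ j, ((G.neighborFinset v).filter (fun u => c u = j)).card ≤ d j := by
    by_contra hno
    push_neg at hno
    have : ∑ j : Fin k, (d j + 1) ≤ ∑ j : Fin k, ((G.neighborFinset v).filter
        (fun u => c u = j)).card := Finset.sum_le_sum (fun j _ => hno j)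
    omega
  obtain ⟨j, hj⟩ := hjex
  set c' : V → Fin k := Function.update c v j with hc'
  have hc'v : c' v = j := Function.update_self v j c
  have hc'ne : ∀ w : V, w ≠ v → c' w = c w := fun w hw => Function.update_of_ne hw j c
  have hvN : v ∉ G.neighborFinset v := by
    rw [SimpleGraph.mem_neighborFinset]; exact G.irrefl
  set DD : Fin k → ℤ := fun x => ∑ w ∈ G.neighborFinset v, (if c w = x then (1 : ℤ) else 0)
    with hDDdef
  have hDD : ∀ x, (((G.neighborFinset v).filter (fun u => c u = x)).card : ℤ) = DD x := by
    intro x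
    rw [hDDdef, Finset.card_filter]
    push_cast
    rfl
  -- second sum difference
  have hsum2 : ∑ u : V, (d (c' u) : ℤ)
      = (∑ u : V, (d (c u) : ℤ)) + ((d j : ℤ) - (d (c v) : ℤ)) := by
    rw [← Finset.sum_erase_add _ _ (mem_univ v),
      ← Finset.sum_erase_add _ (fun u => ((d (c u) : ℤ))) (mem_univ v)]
    have he : ∑ u ∈ Finset.univ.erase v, (d (c' u) : ℤ)
        = ∑ u ∈ Finset.univ.erase v, (d (c u) : ℤ) :=
      Finset.sum_congr rfl (fun u hu => by rw [hc'ne u (ne_of_mem_erase hu)])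
    rw [he, hc'v]
    ring
  -- first sum difference
  have hrowv : ∑ w ∈ G.neighborFinset v, (if c' w = c' v then (1 : ℤ) else 0) = DD j := by
    rw [hc'v, hDDdef]
    refine Finset.sum_congr rfl (fun w hw => ?_)
    rw [hc'ne w (fun h => hvN (h ▸ hw))]
  have hrowu : ∀ u : V, u ≠ v →
      (∑ w ∈ G.neighborFinset u, (if c' w = c' u then (1 : ℤ) else 0))
      = (∑ w ∈ G.neighborFinset u, (if c w = c u then (1 : ℤ) else 0))
        + (if v ∈ G.neighborFinset u then
            ((if j = c u then (1 : ℤ) else 0) - (if c v = c u then (1 : ℤ) else 0)) else 0) := by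
    intro u hu
    have h1 : ∀ w ∈ G.neighborFinset u, (if c' w = c' u then (1 : ℤ) else 0)
        = (if c w = c u then (1 : ℤ) else 0)
          + (if w = v then
              ((if j = c u then (1 : ℤ) else 0) - (if c v = c u then (1 : ℤ) else 0)) else 0) := by
      intro w hw
      by_cases hwv : w = v
      · subst hwv
        rw [hc'v, hc'ne u hu, if_pos rfl]
        ring
      · rw [hc'ne w hwv, hc'ne u hu, if_neg hwv, add_zero]
    rw [Finset.sum_congr rfl h1, Finset.sum_add_distrib,
      Finset.sum_ite_eq' (G.neighborFinset u) v]
  have hmid : ∑ u ∈ Finset.univ.erase v, (if v ∈ G.neighborFinset u then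
      ((if j = c u then (1 : ℤ) else 0) - (if c v = c u then (1 : ℤ) else 0)) else 0)
      = DD j - DD (c v) := by
    rw [Finset.sum_erase _ (by rw [if_neg hvN])]
    have hcongr : ∀ u : V, (if v ∈ G.neighborFinset u then
        ((if j = c u then (1 : ℤ) else 0) - (if c v = c u then (1 : ℤ) else 0)) else 0)
        = (if u ∈ G.neighborFinset v then
        ((if j = c u then (1 : ℤ) else 0) - (if c v = c u then (1 : ℤ) else 0)) else 0) := by
      intro u
      congr 1
      simp only [SimpleGraph.mem_neighborFinset]
      rw [SimpleGraph.adj_comm]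
    rw [Finset.sum_congr rfl (fun u _ => hcongr u), Finset.sum_ite_mem,
      Finset.univ_inter, Finset.sum_sub_distrib, hDDdef]
    congr 1
    · exact Finset.sum_congr rfl (fun u _ => by simp [eq_comm])
    · exact Finset.sum_congr rfl (fun u _ => by simp [eq_comm])
  have hF : (∑ u : V, ∑ w ∈ G.neighborFinset u, (if c' w = c' u then (1 : ℤ) else 0))
      = (∑ u : V, ∑ w ∈ G.neighborFinset u, (if c w = c u then (1 : ℤ) else 0))
        + (DD j - DD (c v)) + (DD j - DD (c v)) := by
    rw [← Finset.sum_erase_add _ _ (mem_univ v),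
      ← Finset.sum_erase_add _ (fun u => ∑ w ∈ G.neighborFinset u,
        (if c w = c u then (1 : ℤ) else 0)) (mem_univ v)]
    have he : ∑ u ∈ Finset.univ.erase v, (∑ w ∈ G.neighborFinset u,
        (if c' w = c' u then (1 : ℤ) else 0))
        = (∑ u ∈ Finset.univ.erase v, ∑ w ∈ G.neighborFinset u,
            (if c w = c u then (1 : ℤ) else 0)) + (DD j - DD (c v)) := by
      rw [Finset.sum_congr rfl (fun u hu => hrowu u (ne_of_mem_erase hu)),
        Finset.sum_add_distrib, hmid]
    rw [he, hrowv]
    have : ∑ w ∈ G.neighborFinset v, (if c w = c v then (1 : ℤ) else 0) = DD (c v) := rfl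
    rw [this]
    ring
  -- conclude
  have e1 : DD j ≤ (d j : ℤ) := by rw [← hDD]; exact_mod_cast hj
  have e2 : (d (c v) : ℤ) < DD (c v) := by rw [← hDD]; exact_mod_cast hcon
  have hlt : Φ c' < Φ c := by
    have h1 : Φ c' = Φ c + 2 * ((DD j - (d j : ℤ)) - (DD (c v) - (d (c v) : ℤ))) := by
      rw [hΦ]
      simp only []
      rw [hF, hsum2]
      ring
    rw [h1]
    have : (DD j - (d j : ℤ)) - (DD (c v) - (d (c v) : ℤ)) ≤ -1 := by omega
    omega
  exact absurd (hmin c' (mem_univ _)) (not_le.2 hlt)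




-- walk lemma: all vertices of a walk in the induced graph lie in the same block
theorem walk_block {T : Finset V} {β : V → ℕ}
    (h2 : ∀ x ∈ T, ∀ y ∈ T, G.Adj x y → β x = β y)
    {a c : (↑T : Set V)} (p : (G.induce (↑T : Set V)).Walk a c) :
    ∀ x ∈ p.support, β (x : V) = β (a : V) := by
  induction p with
  | nil => intro x hx; simp at hx; subst hx; rfl
  | @cons u v w h q ih =>
    intro x hx
    rw [SimpleGraph.Walk.support_cons, List.mem_cons] at hx
    rcases hx with rfl | hx
    · rfl
    · have hadj : G.Adj (u : V) (v : V) := h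
      have := h2 (u : V) (by exact_mod_cast u.2) (v : V) (by exact_mod_cast v.2) hadj
      rw [ih x hx, ← this]





end

section
variable {V : Type*} [Fintype V] [DecidableEq V] {G : SimpleGraph V} [DecidableRel G.Adj]
theorem inv_isLinearForest {T : Finset V} {β : V → ℕ} {m : ℕ}
    (h1 : ∀ x ∈ T, β x < m)
    (h2 : ∀ x ∈ T, ∀ y ∈ T, G.Adj x y → β x = β y)
    (h3 : ∀ b : ℕ, (T.filter (fun x => β x = b)).card ≤ 4)
    (h4 : ∀ b : ℕ, ∀ x ∈ T.filter (fun x => β x = b),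
      (G.neighborFinset x ∩ T.filter (fun x => β x = b)).card ≤ 2)
    (h5 : ∀ b : ℕ, 2 ≤ (T.filter (fun x => β x = b)).card →
      ∃ x ∈ T.filter (fun x => β x = b), ∃ y ∈ T.filter (fun x => β x = b), x ≠ y ∧
        (G.neighborFinset x ∩ T.filter (fun x => β x = b)).card ≤ 1 ∧
        (G.neighborFinset y ∩ T.filter (fun x => β x = b)).card ≤ 1) :
    (G.induce (↑T : Set V)).IsLinearForest 3 := by
  have memT : ∀ x : (↑T : Set V), (x : V) ∈ T := fun x => by exact_mod_cast x.2
  refine ⟨?_, ?_, ?_⟩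
  · -- acyclic
    intro v c hc
    set b0 := β (v : V) with hb0
    set Tb := T.filter (fun x => β x = b0) with hTb
    have hsupp : ∀ x ∈ c.support, (x : V) ∈ Tb := by
      intro x hx
      rw [hTb, mem_filter]
      exact ⟨memT x, walk_block G h2 c x hx⟩
    -- the tail of the support is a nodup list of length = c.length ≥ 3
    have h3len := hc.three_le_length
    have htail : c.support.tail.Nodup := hc.support_nodup
    have htail' : (c.support.tail.map (Subtype.val : (↑T : Set V) → V)).Nodup :=
      htail.map Subtype.val_injective
    set F : Finset V := (c.support.tail.map Subtype.val).toFinset with hF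
    have hFcard : F.card = c.length := by
      rw [hF, List.toFinset_card_of_nodup htail', List.length_map, List.length_tail,
        SimpleGraph.Walk.length_support]
      omega
    have hFsub : F ⊆ Tb := by
      intro x hx
      rw [hF, List.mem_toFinset, List.mem_map] at hx
      obtain ⟨s, hs, rfl⟩ := hx
      exact hsupp s (List.mem_of_mem_tail hs)
    -- get the two low-degree vertices
    obtain ⟨x, hx, y, hy, hxy, hxdeg, hydeg⟩ := h5 b0 (by
      have hc1 := card_le_card hFsub
      rw [← hTb]; omega)
    rw [← hTb] at hx hy hxdeg hydeg
    -- some element of F is x or y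
    have hwex : ∃ w ∈ F, w = x ∨ w = y := by
      by_contra hcon
      push_neg at hcon
      have hsub2 : F ⊆ Tb \ {x, y} := by
        intro w hw
        rw [mem_sdiff, mem_insert, mem_singleton]
        exact ⟨hFsub hw, by rintro (rfl | rfl) <;>
          [exact (hcon w hw).1 rfl; exact (hcon w hw).2 rfl]⟩
      have hxy2 : ({x, y} : Finset V) ⊆ Tb := by
        intro w hw; rw [mem_insert, mem_singleton] at hw
        rcases hw with rfl | rfl <;> assumption
      have hcard2 : ({x, y} : Finset V).card = 2 := by
        rw [card_insert_of_notMem (by simpa using hxy), card_singleton]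
      have hle := card_le_card hsub2
      rw [card_sdiff_of_subset hxy2, hcard2] at hle
      have h3' := h3 b0
      rw [← hTb] at h3'
      omega
    obtain ⟨w, hwF, hwxy⟩ := hwex
    have hwdeg : (G.neighborFinset w ∩ Tb).card ≤ 1 := by
      rcases hwxy with rfl | rfl <;> assumption
    -- w comes from a support vertex; rotate the cycle there
    rw [hF, List.mem_toFinset, List.mem_map] at hwF
    obtain ⟨ws, hws, rfl⟩ := hwF
    have hwsmem : ws ∈ c.support := List.mem_of_mem_tail hws
    set d := c.rotate ws hwsmem with hd
    have hdc : d.IsCycle := hc.rotate hwsmem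
    have hdblock : ∀ x ∈ d.support, (x : V) ∈ Tb := by
      intro x hx
      rw [hTb, mem_filter]
      refine ⟨memT x, ?_⟩
      rw [walk_block G h2 d x hx]
      exact walk_block G h2 c ws hwsmem
    -- d is a cons
    rcases hd' : d with _ | ⟨hadj, t⟩
    · rw [hd'] at hdc; exact SimpleGraph.Walk.IsCycle.not_of_nil hdc
    · rename_i s
      rw [hd'] at hdc hdblock
      rw [SimpleGraph.Walk.cons_isCycle_iff] at hdc
      obtain ⟨htpath, hedge⟩ := hdc
      have hne : ws ≠ s := (SimpleGraph.Adj.ne hadj)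
      -- decompose t.reverse
      obtain ⟨y', hadj2, t2, ht2⟩ := SimpleGraph.Walk.exists_eq_cons_of_ne hne t.reverse
      have hyedge : s(ws, y') ∈ t.edges := by
        have : s(ws, y') ∈ t.reverse.edges := by
          rw [ht2, SimpleGraph.Walk.edges_cons]; exact List.mem_cons_self
        rwa [SimpleGraph.Walk.edges_reverse, List.mem_reverse] at this
      have hsy' : s ≠ y' := by
        rintro rfl
        exact hedge hyedge
      -- s and y' are in the support of (cons hadj t)
      have hsmem : s ∈ (SimpleGraph.Walk.cons hadj t).support := by
        rw [SimpleGraph.Walk.support_cons]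
        exact List.mem_cons_of_mem _ t.start_mem_support
      have hy'mem : y' ∈ (SimpleGraph.Walk.cons hadj t).support := by
        rw [SimpleGraph.Walk.support_cons]
        refine List.mem_cons_of_mem _ ?_
        have : y' ∈ t.reverse.support := by
          rw [ht2, SimpleGraph.Walk.support_cons]
          exact List.mem_cons_of_mem _ t2.start_mem_support
        rwa [SimpleGraph.Walk.support_reverse, List.mem_reverse] at this
      -- now ws has two distinct neighbors in Tb
      have hsub : ({(s : V), (y' : V)} : Finset V) ⊆ G.neighborFinset (ws : V) ∩ Tb := by
        intro z hz
        rw [mem_insert, mem_singleton] at hz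
        rw [mem_inter, SimpleGraph.mem_neighborFinset]
        rcases hz with rfl | rfl
        · exact ⟨hadj, hdblock s hsmem⟩
        · exact ⟨hadj2, hdblock y' hy'mem⟩
      have hcard2 : ({(s : V), (y' : V)} : Finset V).card = 2 := by
        rw [card_insert_of_notMem (by
          simpa using fun h => hsy' (Subtype.val_injective h)), card_singleton]
      have := card_le_card hsub
      rw [hcard2] at this
      omega
  · -- no vertex with three distinct neighbors
    intro v a b c hva hvb hvc
    by_contra hcon
    push_neg at hcon
    obtain ⟨hab, hac, hbc⟩ := hcon
    set b0 := β (v : V)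
    set Tb := T.filter (fun x => β x = b0) with hTb
    have hmem : ∀ u : (↑T : Set V), (G.induce (↑T : Set V)).Adj v u →
        (u : V) ∈ G.neighborFinset (v : V) ∩ Tb := by
      intro u hu
      have hadj : G.Adj (v : V) (u : V) := hu
      rw [mem_inter, SimpleGraph.mem_neighborFinset, hTb, mem_filter]
      exact ⟨hadj, memT u, (h2 _ (memT v) _ (memT u) hadj).symm⟩
    have hsub : ({(a : V), (b : V), (c : V)} : Finset V) ⊆ G.neighborFinset (v : V) ∩ Tb := by
      intro z hz
      simp only [mem_insert, mem_singleton] at hz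
      rcases hz with rfl | rfl | rfl
      · exact hmem a hva
      · exact hmem b hvb
      · exact hmem c hvc
    have hcard3 : ({(a : V), (b : V), (c : V)} : Finset V).card = 3 := by
      rw [card_insert_of_notMem, card_insert_of_notMem, card_singleton]
      · simpa using fun h => hbc (Subtype.val_injective h)
      · simp only [mem_insert, mem_singleton]
        push_neg
        exact ⟨fun h => hab (Subtype.val_injective h), fun h => hac (Subtype.val_injective h)⟩
    have := card_le_card hsub
    have h4' := h4 b0 (v : V) (by rw [mem_filter]; exact ⟨memT v, rfl⟩)
    rw [← hTb] at h4'
    omega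
  · -- all paths have length ≤ 3
    intro u v p hp
    have hsupp : ∀ x ∈ p.support, (x : V) ∈ T.filter (fun x => β x = β (u : V)) := by
      intro x hx
      rw [mem_filter]
      exact ⟨memT x, walk_block G h2 p x hx⟩
    have hnodup : (p.support.map (Subtype.val : (↑T : Set V) → V)).Nodup :=
      hp.support_nodup.map Subtype.val_injective
    have hsub : (p.support.map Subtype.val).toFinset ⊆ T.filter (fun x => β x = β (u : V)) := by
      intro x hx
      rw [List.mem_toFinset, List.mem_map] at hx
      obtain ⟨s, hs, rfl⟩ := hx
      exact hsupp s hs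
    have hcard : (p.support.map (Subtype.val : (↑T : Set V) → V)).toFinset.card
        = p.length + 1 := by
      rw [List.toFinset_card_of_nodup hnodup, List.length_map,
        SimpleGraph.Walk.length_support]
    have := card_le_card hsub
    have := h3 (β (u : V))
    omega



theorem inv_isLinearForest' {T : Finset V} {β : V → ℕ} {m : ℕ} (h : Inv G T β m) :
    (G.induce (↑T : Set V)).IsLinearForest 3 :=
  inv_isLinearForest h.1 h.2.1 h.2.2.1 h.2.2.2.1 h.2.2.2.2
end

end LF3

/-- **Lower bound on maximum induced linear 3-forests in regular graphs.**
If `Δ > 0` and `G` is a finite simple `Δ`-regular graph of order `n`, then `G` has an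
induced linear `3`-forest on at least `2n/(Δ + 1)` vertices. -/

theorem linear_three_forest_regular {V : Type*} [Fintype V]
    (G : SimpleGraph V) [DecidableRel G.Adj]
    (Δ : ℕ) (hΔpos : 0 < Δ) (hreg : G.IsRegularOfDegree Δ)
    (n : ℕ) (hn : n = Fintype.card V) :
    ∃ S : Finset V, (G.induce (S : Set V)).IsLinearForest 3 ∧
      2 * (n : ℝ) / (Δ + 1) ≤ (S.card : ℝ) := by
  classical
  set k : ℕ := (Δ + 1) / 2 with hkdef
  have hk : 0 < k := by omega
  set d : Fin k → ℕ := fun i => if Δ % 2 = 0 ∧ i.val = 0 then 2 else 1 with hd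
  have hd12 : ∀ i, d i = 1 ∨ d i = 2 := by
    intro i; rw [hd]; dsimp only; split_ifs <;> simp
  have hsumd : ∑ i, (d i + 1) = Δ + 1 := by
    have h1 : ∀ i : Fin k, d i + 1
        = 2 + (if i = (⟨0, hk⟩ : Fin k) then (if Δ % 2 = 0 then 1 else 0) else 0) := by
      intro i
      rw [hd]; dsimp only
      by_cases h0 : i = (⟨0, hk⟩ : Fin k)
      · subst h0
        by_cases hpar : Δ % 2 = 0 <;> simp [hpar]
      · have : i.val ≠ 0 := by
          intro hval
          exact h0 (Fin.ext hval)
        simp [this, h0]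
    rw [Finset.sum_congr rfl (fun i _ => h1 i), Finset.sum_add_distrib,
      Finset.sum_const, Finset.sum_ite_eq' Finset.univ (⟨0, hk⟩ : Fin k)]
    simp only [Finset.mem_univ, if_true, Finset.card_univ, Fintype.card_fin, smul_eq_mul]
    by_cases hpar : Δ % 2 = 0 <;> simp [hpar] <;> omega
  obtain ⟨c, hc⟩ := LF3.lovasz_partition G hk d (le_of_eq hsumd.symm) hreg
  set A : Fin k → Finset V := fun i => Finset.univ.filter (fun v => c v = i) with hA
  have hpart : ∀ i, ∀ v ∈ A i, (G.neighborFinset v ∩ A i).card ≤ d i := by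
    intro i v hv
    have hveq : c v = i := by
      rw [hA] at hv
      exact (Finset.mem_filter.1 hv).2
    have heq : G.neighborFinset v ∩ A i
        = (G.neighborFinset v).filter (fun u => c u = c v) := by
      rw [hA, hveq]
      ext w
      simp [Finset.mem_filter, Finset.mem_inter]
    rw [heq, ← hveq]
    exact hc v
  have hchoice : ∀ i : Fin k, ∃ T : Finset V, T ⊆ A i ∧ (∃ β m, LF3.Inv G T β m) ∧
      2 * (A i).card ≤ (d i + 1) * T.card := by
    intro i
    rcases hd12 i with hdi | hdi
    · obtain ⟨β, m, hInv⟩ := LF3.lemB1 G (A i) (fun v hv => by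
        have := hpart i v hv; omega)
      exact ⟨A i, Finset.Subset.refl _, ⟨β, m, hInv⟩, by rw [hdi]⟩
    · obtain ⟨T, β, m, hT, hInv, hcard⟩ := LF3.lemB2 G (A i) (fun v hv => by
        have := hpart i v hv; omega)
      exact ⟨T, hT, ⟨β, m, hInv⟩, by rw [hdi]; exact hcard⟩
  choose Tf hTsub hTInv hTcard using hchoice
  obtain ⟨i0, -, hmax⟩ := Finset.exists_max_image Finset.univ (fun i => (Tf i).card)
    ⟨⟨0, hk⟩, Finset.mem_univ _⟩
  have hnsum : ∑ i, (A i).card = n := by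
    rw [hn, ← Finset.card_univ,
      Finset.card_eq_sum_card_fiberwise (fun v _ => Finset.mem_univ (c v))]
  have key : 2 * n ≤ (Δ + 1) * (Tf i0).card := by
    calc 2 * n = ∑ i, 2 * (A i).card := by rw [← Finset.mul_sum, hnsum]
      _ ≤ ∑ i, (d i + 1) * (Tf i).card := Finset.sum_le_sum (fun i _ => hTcard i)
      _ ≤ ∑ i, (d i + 1) * (Tf i0).card := Finset.sum_le_sum (fun i _ =>
          Nat.mul_le_mul_left _ (hmax i (Finset.mem_univ i)))
      _ = (∑ i, (d i + 1)) * (Tf i0).card := by rw [Finset.sum_mul]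
      _ = (Δ + 1) * (Tf i0).card := by rw [hsumd]
  obtain ⟨β, m, hInv⟩ := hTInv i0
  refine ⟨Tf i0, LF3.inv_isLinearForest' hInv, ?_⟩
  have hpos : (0 : ℝ) < (Δ : ℝ) + 1 := by positivity
  rw [div_le_iff₀ hpos]
  have key' : (2 * n : ℝ) ≤ ((Δ + 1) * (Tf i0).card : ℝ) := by exact_mod_cast key
  nlinarith [key']
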